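/- For every integer l ≥ 1 and all λ, R > 0, F₃(λ,l,R) := (G₀ c_B I₁(√λ R)/I₀(√λ R)) · ( I₁'(√λ R)/I₁(√λ R) − I_l'(√λ R)/I_l(√λ R) ) is nonpositive, and strictly negative for l ≥ 2; in particular F₃(λ,1,R) = 0. -/

import Mathlib

open MeasureTheory Real

/-- Modified Bessel function of the first kind of integer order `n`,
via the standard integral representation. -/
noncomputable def besselI (n : ℕ) (r : ℝ) : ℝ :=
  (1 / π) * ∫ θ in (0:ℝ)..π, Real.exp (r * Real.cos θ) * Real.cos (n * θ)

/-- Modified Bessel function of the second kind of integer order `n`,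
via the standard integral representation. -/
noncomputable def besselK (n : ℕ) (r : ℝ) : ℝ :=
  ∫ t in Set.Ioi (0:ℝ), Real.exp (-r * Real.cosh t) * Real.cosh (n * t)

open intervalIntegral

noncomputable def bA (n : ℕ) (r : ℝ) : ℝ :=
  ∫ θ in (0:ℝ)..π, Real.exp (r * Real.cos θ) * Real.cos (n * θ)

lemma hasDerivAt_bJ (w : ℝ → ℝ) (hw : Continuous w) (hb : ∀ θ, |w θ| ≤ 1) (r₀ : ℝ) :
    HasDerivAt (fun r => ∫ θ in (0:ℝ)..π, Real.exp (r * Real.cos θ) * w θ)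
      (∫ θ in (0:ℝ)..π, Real.cos θ * Real.exp (r₀ * Real.cos θ) * w θ) r₀ := by
  have h := intervalIntegral.hasDerivAt_integral_of_dominated_loc_of_deriv_le
    (F := fun r θ => Real.exp (r * Real.cos θ) * w θ)
    (F' := fun r θ => Real.cos θ * Real.exp (r * Real.cos θ) * w θ)
    (a := 0) (b := π) (μ := volume) (x₀ := r₀)
    (bound := fun _ => Real.exp (|r₀| + 1))
    (s := Metric.ball r₀ 1) (Metric.ball_mem_nhds r₀ one_pos)
    ?_ ?_ ?_ ?_ ?_ ?_
  · exact h.2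
  · filter_upwards with x
    exact (((Real.continuous_exp.comp (continuous_const.mul Real.continuous_cos)).mul hw)).aestronglyMeasurable
  · exact ((Real.continuous_exp.comp (continuous_const.mul Real.continuous_cos)).mul hw).intervalIntegrable _ _
  · exact ((Real.continuous_cos.mul (Real.continuous_exp.comp (continuous_const.mul Real.continuous_cos))).mul hw).aestronglyMeasurable
  · filter_upwards with t ht x hx
    have h1 : |Real.cos t| ≤ 1 := Real.abs_cos_le_one t
    have h2 : Real.exp (x * Real.cos t) ≤ Real.exp (|r₀| + 1) := by
      apply Real.exp_le_exp.2
      have : |x * Real.cos t| ≤ |x| := by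
        rw [abs_mul]
        nlinarith [abs_nonneg x]
      have hx' : |x - r₀| < 1 := by simpa [Metric.mem_ball, Real.dist_eq] using hx
      have : |x| ≤ |r₀| + 1 := by
        have := abs_sub_abs_le_abs_sub x r₀
        linarith
      calc x * Real.cos t ≤ |x * Real.cos t| := le_abs_self _
        _ ≤ |x| := by rw [abs_mul]; nlinarith [abs_nonneg x, Real.abs_cos_le_one t]
        _ ≤ |r₀| + 1 := this
    calc ‖Real.cos t * Real.exp (x * Real.cos t) * w t‖
        = |Real.cos t| * Real.exp (x * Real.cos t) * |w t| := by
          rw [Real.norm_eq_abs, abs_mul, abs_mul, Real.abs_exp]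
      _ ≤ 1 * Real.exp (|r₀| + 1) * 1 := by
          apply mul_le_mul (mul_le_mul h1 h2 (Real.exp_pos _).le zero_le_one) (hb t) (abs_nonneg _)
          positivity
      _ = Real.exp (|r₀| + 1) := by ring
  · exact intervalIntegrable_const
  · filter_upwards with t ht x hx
    have : HasDerivAt (fun x : ℝ => Real.exp (x * Real.cos t)) (Real.cos t * Real.exp (x * Real.cos t)) x := by
      have := ((hasDerivAt_id x).mul_const (Real.cos t)).exp
      simpa [mul_comm] using this
    simpa [mul_assoc] using this.mul_const (w t)

lemma contExpCos (r : ℝ) (n : ℕ) : Continuous fun θ : ℝ => Real.exp (r * Real.cos θ) * Real.cos (n * θ) := by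
  fun_prop

lemma hasDerivAt_bA0 (r : ℝ) : HasDerivAt (bA 0) (bA 1 r) r := by
  have h := hasDerivAt_bJ (fun θ => Real.cos ((0:ℕ) * θ)) (by fun_prop) (fun θ => Real.abs_cos_le_one _) r
  have e2 : bA 1 r = ∫ θ in (0:ℝ)..π, Real.cos θ * Real.exp (r * Real.cos θ) * Real.cos ((0:ℕ) * θ) := by
    unfold bA
    apply intervalIntegral.integral_congr
    intro θ _
    simp [mul_comm]
  rw [e2]
  exact h

lemma hasDerivAt_bA (n : ℕ) (r : ℝ) :
    HasDerivAt (bA (n+1)) ((bA n r + bA (n+2) r) / 2) r := by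
  have h := hasDerivAt_bJ (fun θ => Real.cos ((n+1 : ℕ) * θ)) (by fun_prop) (fun θ => Real.abs_cos_le_one _) r
  have e2 : (bA n r + bA (n+2) r) / 2
      = ∫ θ in (0:ℝ)..π, Real.cos θ * Real.exp (r * Real.cos θ) * Real.cos ((n+1 : ℕ) * θ) := by
    have key : ∀ θ : ℝ, Real.cos θ * Real.exp (r * Real.cos θ) * Real.cos ((n+1 : ℕ) * θ)
        = (Real.exp (r * Real.cos θ) * Real.cos (n * θ) + Real.exp (r * Real.cos θ) * Real.cos ((n+2 : ℕ) * θ)) / 2 := by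
      intro θ
      have h1 : Real.cos ((n:ℝ) * θ) + Real.cos (((n:ℕ)+2 : ℕ) * θ)
          = 2 * Real.cos (((n:ℕ)+1 : ℕ) * θ) * Real.cos θ := by
        push_cast
        have e3 : (n:ℝ) * θ = ((n:ℝ)+1) * θ - θ := by ring
        have e4 : ((n:ℝ)+2) * θ = ((n:ℝ)+1) * θ + θ := by ring
        rw [e3, e4, Real.cos_add, Real.cos_sub]
        ring
      push_cast at h1 ⊢
      linear_combination (-(Real.exp (r * Real.cos θ)) / 2) * h1
    rw [intervalIntegral.integral_congr (g := fun θ => (Real.exp (r * Real.cos θ) * Real.cos (n * θ) + Real.exp (r * Real.cos θ) * Real.cos ((n+2 : ℕ) * θ)) / 2) (fun θ _ => key θ)]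
    unfold bA
    rw [intervalIntegral.integral_div, intervalIntegral.integral_add ((contExpCos r n).intervalIntegrable _ _) ((contExpCos r (n+2)).intervalIntegrable _ _)]
  rw [e2]
  exact h

lemma bA_rec (n : ℕ) (r : ℝ) :
    ((n:ℝ)+1) * bA (n+1) r = r/2 * (bA n r - bA (n+2) r) := by
  have hd : ∀ θ ∈ Set.uIcc (0:ℝ) π, HasDerivAt (fun θ : ℝ => Real.exp (r * Real.cos θ) * Real.sin ((n+1 : ℕ) * θ))
      (Real.exp (r * Real.cos θ) * (((n:ℝ)+1) * Real.cos ((n+1:ℕ) * θ) - r * Real.sin θ * Real.sin ((n+1:ℕ) * θ))) θ := by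
    intro θ _
    have h1 : HasDerivAt (fun θ : ℝ => Real.exp (r * Real.cos θ)) (Real.exp (r * Real.cos θ) * (-(r * Real.sin θ))) θ := by
      have := ((Real.hasDerivAt_cos θ).const_mul r).exp
      simpa [mul_comm] using this
    have h2 : HasDerivAt (fun θ : ℝ => Real.sin ((n+1 : ℕ) * θ)) (((n:ℝ)+1) * Real.cos ((n+1:ℕ) * θ)) θ := by
      have := (Real.hasDerivAt_sin (((n:ℕ)+1 : ℕ) * θ)).comp θ ((hasDerivAt_id θ).const_mul ((n+1 : ℕ) : ℝ))
      push_cast at this ⊢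
      refine this.congr_deriv ?_
      ring
    have := h1.mul h2
    refine this.congr_deriv ?_
    ring
  have hint : IntervalIntegrable (fun θ => Real.exp (r * Real.cos θ) * (((n:ℝ)+1) * Real.cos ((n+1:ℕ) * θ) - r * Real.sin θ * Real.sin ((n+1:ℕ) * θ))) volume 0 π := by
    apply Continuous.intervalIntegrable; fun_prop
  have h0 := intervalIntegral.integral_eq_sub_of_hasDerivAt hd hint
  have hb : (Real.exp (r * Real.cos π) * Real.sin ((n+1 : ℕ) * π)) - (Real.exp (r * Real.cos 0) * Real.sin ((n+1 : ℕ) * 0)) = 0 := by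
    push_cast
    have h := Real.sin_nat_mul_pi (n+1)
    push_cast at h
    simp [h]
  rw [hb] at h0
  -- now h0 : ∫ ... = 0 ; expand
  have key : ∀ θ : ℝ, Real.exp (r * Real.cos θ) * (((n:ℝ)+1) * Real.cos ((n+1:ℕ) * θ) - r * Real.sin θ * Real.sin ((n+1:ℕ) * θ))
      = ((n:ℝ)+1) * (Real.exp (r * Real.cos θ) * Real.cos ((n+1:ℕ) * θ))
        - r/2 * (Real.exp (r * Real.cos θ) * Real.cos (n * θ))
        + r/2 * (Real.exp (r * Real.cos θ) * Real.cos ((n+2:ℕ) * θ)) := by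
    intro θ
    have h1 : Real.cos ((n:ℝ) * θ) - Real.cos (((n:ℝ)+2) * θ) = 2 * Real.sin (((n:ℝ)+1) * θ) * Real.sin θ := by
      have e3 : (n:ℝ) * θ = ((n:ℝ)+1) * θ - θ := by ring
      have e4 : ((n:ℝ)+2) * θ = ((n:ℝ)+1) * θ + θ := by ring
      rw [e3, e4, Real.cos_add, Real.cos_sub]
      ring
    push_cast
    push_cast at h1
    linear_combination (r / 2 * Real.exp (r * Real.cos θ)) * h1
  rw [intervalIntegral.integral_congr (fun θ _ => key θ)] at h0
  rw [intervalIntegral.integral_add, intervalIntegral.integral_sub, intervalIntegral.integral_const_mul, intervalIntegral.integral_const_mul, intervalIntegral.integral_const_mul] at h0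
  · unfold bA; linarith [h0]
  all_goals apply Continuous.intervalIntegrable
  all_goals fun_prop

lemma bA_cont (n : ℕ) : Continuous (bA n) := by
  rw [continuous_iff_continuousAt]
  intro r
  cases n with
  | zero => exact (hasDerivAt_bA0 r).continuousAt
  | succ m => exact (hasDerivAt_bA m r).continuousAt

lemma bA0_pos (r : ℝ) : 0 < bA 0 r := by
  unfold bA
  apply intervalIntegral.intervalIntegral_pos_of_pos_on
  · apply Continuous.intervalIntegrable; fun_prop
  · intro x _
    simp only [Nat.cast_zero, zero_mul, Real.cos_zero, mul_one]
    exact Real.exp_pos _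
  · exact Real.pi_pos

lemma bA_pos (n : ℕ) (r : ℝ) (hr : 0 < r) : 0 < bA n r := by
  induction n generalizing r with
  | zero => exact bA0_pos r
  | succ m ih =>
    set u : ℝ → ℝ := fun s => s^(m+1) * bA (m+1) s with hu
    have hder : ∀ s : ℝ, HasDerivAt u (s^(m+1) * bA m s) s := by
      intro s
      have h := ((hasDerivAt_pow (m+1) s).mul (hasDerivAt_bA m s))
      refine h.congr_deriv ?_
      push_cast
      linear_combination (s^m) * bA_rec m s
    have hmono : StrictMonoOn u (Set.Icc 0 r) := by
      apply strictMonoOn_of_deriv_pos (convex_Icc 0 r)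
      · exact (Continuous.mul (by fun_prop) (bA_cont (m+1))).continuousOn
      · intro x hx
        rw [interior_Icc] at hx
        rw [(hder x).deriv]
        exact mul_pos (pow_pos hx.1 _) (ih x hx.1)
    have h0 : u 0 = 0 := by simp [hu]
    have := hmono (Set.left_mem_Icc.2 hr.le) (Set.right_mem_Icc.2 hr.le) hr
    rw [h0] at this
    have hrp : 0 < r^(m+1) := pow_pos hr _
    have h2 : 0 < r^(m+1) * bA (m+1) r := this
    nlinarith [h2, hrp]

lemma wronskian_neg (k : ℕ) (x : ℝ) (hx : 0 < x) :
    (bA 0 x + bA 2 x)/2 * bA (k+2) x < (bA (k+1) x + bA (k+3) x)/2 * bA 1 x := by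
  set g : ℝ → ℝ := fun r =>
    r * ((bA 0 r + bA 2 r)/2 * bA (k+2) r - (bA (k+1) r + bA (k+3) r)/2 * bA 1 r) with hg
  have hder : ∀ r : ℝ, HasDerivAt g
      (1 * ((bA 0 r + bA 2 r)/2 * bA (k+2) r - (bA (k+1) r + bA (k+3) r)/2 * bA 1 r)
        + r * ((((bA 1 r) + (bA 1 r + bA 3 r)/2)/2) * bA (k+2) r
            + (bA 0 r + bA 2 r)/2 * ((bA (k+1) r + bA (k+3) r)/2)
          - (((((bA k r + bA (k+2) r)/2) + ((bA (k+2) r + bA (k+4) r)/2))/2) * bA 1 r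
            + (bA (k+1) r + bA (k+3) r)/2 * ((bA 0 r + bA 2 r)/2)))) r := by
    intro r
    have hP : HasDerivAt (fun r => (bA 0 r + bA 2 r)/2 * bA (k+2) r)
        ((((bA 1 r) + (bA 1 r + bA 3 r)/2)/2) * bA (k+2) r
          + (bA 0 r + bA 2 r)/2 * ((bA (k+1) r + bA (k+3) r)/2)) r := by
      exact (((hasDerivAt_bA0 r).add (hasDerivAt_bA 1 r)).div_const 2).mul (hasDerivAt_bA (k+1) r)
    have hQ : HasDerivAt (fun r => (bA (k+1) r + bA (k+3) r)/2 * bA 1 r)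
        (((bA k r + bA (k+2) r)/2 + (bA (k+2) r + bA (k+4) r)/2)/2 * bA 1 r
          + (bA (k+1) r + bA (k+3) r)/2 * ((bA 0 r + bA 2 r)/2)) r := by
      exact (((hasDerivAt_bA k r).add (hasDerivAt_bA (k+2) r)).div_const 2).mul (hasDerivAt_bA 0 r)
    exact (hasDerivAt_id r).mul (hP.sub hQ)
  have hneg : ∀ r ∈ Set.Ioo 0 x, deriv g r < 0 := by
    intro r hr
    rw [(hder r).deriv]
    have h0 := bA_rec 0 r
    have h1 := bA_rec 1 r
    have hk := bA_rec k r
    have hk1 := bA_rec (k+1) r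
    have hk2 := bA_rec (k+2) r
    push_cast at h0 h1 hk hk1 hk2
    have hrpos := hr.1
    have key : r * (1 * ((bA 0 r + bA 2 r)/2 * bA (k+2) r - (bA (k+1) r + bA (k+3) r)/2 * bA 1 r)
        + r * ((((bA 1 r) + (bA 1 r + bA 3 r)/2)/2) * bA (k+2) r
            + (bA 0 r + bA 2 r)/2 * ((bA (k+1) r + bA (k+3) r)/2)
          - (((((bA k r + bA (k+2) r)/2) + ((bA (k+2) r + bA (k+4) r)/2))/2) * bA 1 r
            + (bA (k+1) r + bA (k+3) r)/2 * ((bA 0 r + bA 2 r)/2))))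
        = (1 - ((k:ℝ)+2)^2) * (bA 1 r * bA (k+2) r) := by
      linear_combination (-(bA (k+2) r)) * h0 + (r * bA (k+2) r / 2) * h1
        + (r * bA 1 r / 2) * hk + (((k:ℝ)+2) * bA 1 r) * hk1 + (-(r * bA 1 r / 2)) * hk2
    have hsq : (4:ℝ) ≤ ((k:ℝ)+2)^2 := by nlinarith [Nat.cast_nonneg (α := ℝ) k]
    nlinarith [key, mul_pos (bA_pos 1 r hrpos) (bA_pos (k+2) r hrpos), hrpos]
  have hcont : ContinuousOn g (Set.Icc 0 x) := by
    apply Continuous.continuousOn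
    rw [hg]
    exact continuous_id.mul ((((((bA_cont 0).add (bA_cont 2)).div_const 2).mul (bA_cont (k+2)))).sub
      ((((bA_cont (k+1)).add (bA_cont (k+3))).div_const 2).mul (bA_cont 1)))
  have hanti : StrictAntiOn g (Set.Icc 0 x) := by
    apply strictAntiOn_of_deriv_neg (convex_Icc 0 x) hcont
    intro r hr
    rw [interior_Icc] at hr
    exact hneg r hr
  have h0 : g 0 = 0 := by simp [hg]
  have := hanti (Set.left_mem_Icc.2 hx.le) (Set.right_mem_Icc.2 hx.le) hx
  rw [h0] at this
  have h2 : x * ((bA 0 x + bA 2 x)/2 * bA (k+2) x - (bA (k+1) x + bA (k+3) x)/2 * bA 1 x) < 0 := this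
  nlinarith [h2, hx]

lemma besselI_eq (n : ℕ) : besselI n = fun r => (1/π) * bA n r := rfl

lemma besselI_pos (n : ℕ) (r : ℝ) (hr : 0 < r) : 0 < besselI n r := by
  rw [besselI_eq]
  have := bA_pos n r hr
  have := Real.pi_pos
  positivity

lemma deriv_besselI1 (r : ℝ) :
    deriv (besselI 1) r = (1/π) * ((bA 0 r + bA 2 r)/2) := by
  rw [besselI_eq]
  exact (((hasDerivAt_bA 0 r).const_mul (1/π))).deriv

lemma deriv_besselI (k : ℕ) (r : ℝ) :
    deriv (besselI (k+2)) r = (1/π) * ((bA (k+1) r + bA (k+3) r)/2) := by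
  rw [besselI_eq]
  exact (((hasDerivAt_bA (k+1) r).const_mul (1/π))).deriv

theorem stmt_15 (G₀ c_B : ℝ) (hG : 0 < G₀) (hc : 0 < c_B)
    (l : ℕ) (hl : 1 ≤ l) (lam R : ℝ) (hlam : 0 < lam) (hR : 0 < R)
    (F₃ : ℝ)
    (hF₃ : F₃ = (G₀ * c_B * besselI 1 (Real.sqrt lam * R) / besselI 0 (Real.sqrt lam * R)) *
      (deriv (besselI 1) (Real.sqrt lam * R) / besselI 1 (Real.sqrt lam * R) -
       deriv (besselI l) (Real.sqrt lam * R) / besselI l (Real.sqrt lam * R))) :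
    F₃ ≤ 0 ∧ (2 ≤ l → F₃ < 0) ∧ (l = 1 → F₃ = 0) := by
  set x : ℝ := Real.sqrt lam * R with hxdef
  have hx : 0 < x := mul_pos (Real.sqrt_pos.2 hlam) hR
  have heq1 : l = 1 → F₃ = 0 := by
    intro h
    subst h
    rw [hF₃, sub_self, mul_zero]
  have hlt : 2 ≤ l → F₃ < 0 := by
    intro h2
    obtain ⟨k, rfl⟩ : ∃ k, l = k + 2 := ⟨l - 2, by omega⟩
    have i0 := besselI_pos 0 x hx
    have i1 := besselI_pos 1 x hx
    have il := besselI_pos (k+2) x hx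
    have hpi := Real.pi_pos
    have hW := wronskian_neg k x hx
    have hd1 := deriv_besselI1 x
    have hdl := deriv_besselI k x
    have hC : 0 < G₀ * c_B * besselI 1 x / besselI 0 x := by positivity
    have hdiff : deriv (besselI 1) x / besselI 1 x - deriv (besselI (k+2)) x / besselI (k+2) x < 0 := by
      rw [sub_neg, div_lt_div_iff₀ i1 il, hd1, hdl]
      have hb1 : besselI 1 x = (1/π) * bA 1 x := by rw [besselI_eq]
      have hbl : besselI (k+2) x = (1/π) * bA (k+2) x := by rw [besselI_eq]
      rw [hb1, hbl]
      have hpi2 : (0:ℝ) < (1/π) * (1/π) := by positivity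
      nlinarith [hW, hpi2]
    rw [hF₃]
    exact mul_neg_of_pos_of_neg hC hdiff
  refine ⟨?_, hlt, heq1⟩
  rcases Nat.lt_or_ge l 2 with h | h
  · have : l = 1 := by omega
    exact le_of_eq (heq1 this)
  · exact (hlt h).le
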